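/- Let g₁, g₂, g₃ : ℝ → ℝ be cubic polynomials satisfying the interpolation conditions g₁(i-3)=d₁, g₁(i-1)=d₂=g₂(i-1), g₂(i+1)=d₃=g₃(i+1), g₃(i+3)=d₄, C² matching at i-1 and i+1, and the natural boundary conditions g₁''(i-3)=0 and g₃''(i+3)=0. Then g₂(i) = -3/40·d₁ + 23/40·d₂ + 23/40·d₃ - 3/40·d₄. -/

import Mathlib

private lemma cubic_hasDerivAt (a b c d t : ℝ) :
    HasDerivAt (fun x : ℝ => a * x ^ 3 + b * x ^ 2 + c * x + d)
      (3 * a * t ^ 2 + 2 * b * t + c) t := by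
  have h := (((hasDerivAt_pow 3 t).const_mul a).add
      (((hasDerivAt_pow 2 t).const_mul b).add
        (((hasDerivAt_id t).const_mul c).add (hasDerivAt_const t d))))
  have hfun : (fun x : ℝ => a * x ^ 3 + (b * x ^ 2 + (c * id x + d)))
      = fun x : ℝ => a * x ^ 3 + b * x ^ 2 + c * x + d := by
    funext x; simp [id]; ring
  simp only [Pi.add_def] at h
  rw [hfun] at h
  refine h.congr_deriv ?_
  push_cast
  ring

private lemma cubic_deriv (a b c d : ℝ) :
    deriv (fun x : ℝ => a * x ^ 3 + b * x ^ 2 + c * x + d)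
      = fun t => 3 * a * t ^ 2 + 2 * b * t + c := by
  funext t; exact (cubic_hasDerivAt a b c d t).deriv

private lemma cubic_deriv2 (a b c d : ℝ) (t : ℝ) :
    iteratedDeriv 2 (fun x : ℝ => a * x ^ 3 + b * x ^ 2 + c * x + d) t
      = 6 * a * t + 2 * b := by
  rw [iteratedDeriv_succ, iteratedDeriv_one, cubic_deriv]
  have : (fun t : ℝ => 3 * a * t ^ 2 + 2 * b * t + c)
      = fun t : ℝ => 0 * t ^ 3 + (3 * a) * t ^ 2 + (2 * b) * t + c := by
    funext t; ring
  rw [this, cubic_deriv]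
  ring

theorem natural_spline_formula (i d₁ d₂ d₃ d₄ : ℝ) (g₁ g₂ g₃ : ℝ → ℝ)
    (a₁ b₁ c₁ δ₁ a₂ b₂ c₂ δ₂ a₃ b₃ c₃ δ₃ : ℝ)
    (hg₁ : ∀ x, g₁ x = a₁ * x ^ 3 + b₁ * x ^ 2 + c₁ * x + δ₁)
    (hg₂ : ∀ x, g₂ x = a₂ * x ^ 3 + b₂ * x ^ 2 + c₂ * x + δ₂)
    (hg₃ : ∀ x, g₃ x = a₃ * x ^ 3 + b₃ * x ^ 2 + c₃ * x + δ₃)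
    (h1 : g₁ (i - 3) = d₁) (h2 : g₁ (i - 1) = d₂)
    (h3 : g₂ (i - 1) = d₂) (h4 : g₂ (i + 1) = d₃)
    (h5 : g₃ (i + 1) = d₃) (h6 : g₃ (i + 3) = d₄)
    (hd1 : deriv g₁ (i - 1) = deriv g₂ (i - 1))
    (hd2 : deriv g₂ (i + 1) = deriv g₃ (i + 1))
    (hdd1 : iteratedDeriv 2 g₁ (i - 1) = iteratedDeriv 2 g₂ (i - 1))
    (hdd2 : iteratedDeriv 2 g₂ (i + 1) = iteratedDeriv 2 g₃ (i + 1))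
    (hnat1 : iteratedDeriv 2 g₁ (i - 3) = 0)
    (hnat2 : iteratedDeriv 2 g₃ (i + 3) = 0) :
    g₂ i = -3 / 40 * d₁ + 23 / 40 * d₂ + 23 / 40 * d₃ - 3 / 40 * d₄ := by
  have e₁ : g₁ = fun x => a₁ * x ^ 3 + b₁ * x ^ 2 + c₁ * x + δ₁ := funext hg₁
  have e₂ : g₂ = fun x => a₂ * x ^ 3 + b₂ * x ^ 2 + c₂ * x + δ₂ := funext hg₂
  have e₃ : g₃ = fun x => a₃ * x ^ 3 + b₃ * x ^ 2 + c₃ * x + δ₃ := funext hg₃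
  subst e₁ e₂ e₃
  simp only [cubic_deriv, cubic_deriv2] at hd1 hd2 hdd1 hdd2 hnat1 hnat2
  simp only [] at h1 h2 h3 h4 h5 h6 ⊢
  linear_combination (-3/40 : ℝ) * h1 + (3/40 : ℝ) * h2 + (1/2 : ℝ) * h3
    + (1/2 : ℝ) * h4 + (3/40 : ℝ) * h5 + (-3/40 : ℝ) * h6
    + (-3/20 : ℝ) * hd1 + (-3/20 : ℝ) * hd2 + (1/10 : ℝ) * hdd1
    + (-1/10 : ℝ) * hdd2 + (1/20 : ℝ) * hnat1 + (1/20 : ℝ) * hnat2
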